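/- Knight's identity: For all real numbers u and v, ρ_τ(u−v) − ρ_τ(u) = −v(τ − 𝟙{u ≤ 0}) + ∫₀^v (𝟙{u ≤ z} − 𝟙{u ≤ 0}) dz, where ρ_τ(t) = t(τ − 𝟙{t < 0}) is the quantile (pinball) loss. -/
import Mathlib

open intervalIntegral

lemma step_mono (u : ℝ) : Monotone (fun z : ℝ => if u ≤ z then (1:ℝ) else 0) := by
  intro x y hxy
  dsimp only
  split_ifs with h1 h2 h2 <;> norm_num
  exact h2 (h1.trans hxy)

lemma step_intble (u a b : ℝ) :
    IntervalIntegrable (fun z : ℝ => if u ≤ z then (1:ℝ) else 0) MeasureTheory.volume a b :=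
  (step_mono u).intervalIntegrable

lemma step_int (u a b : ℝ) :
    ∫ z in a..b, (if u ≤ z then (1:ℝ) else 0) = max b u - max a u := by
  have key : ∀ a b : ℝ, a ≤ b →
      ∫ z in a..b, (if u ≤ z then (1:ℝ) else 0) = max b u - max a u := by
    intro a b hab
    rcases le_total u a with h | h
    · rw [intervalIntegral.integral_congr (g := fun _ => (1:ℝ))
        (by intro z hz; rw [Set.uIcc_of_le hab] at hz; simp [h.trans hz.1])]
      rw [max_eq_left (h.trans hab), max_eq_left h]
      simp
    · rcases le_total b u with h' | h'
      · rw [max_eq_right h', max_eq_right (hab.trans h'), sub_self]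
        apply intervalIntegral.integral_zero_ae
        have hne : ∀ᵐ z : ℝ, z ≠ u := by
          refine MeasureTheory.ae_iff.2 ?_
          simpa using MeasureTheory.measure_singleton u
        filter_upwards [hne] with z hz hz'
        rw [Set.uIoc_of_le hab] at hz'
        have : ¬ u ≤ z := fun hle => hz (le_antisymm (hz'.2.trans h') hle)
        simp [this]
      · rw [← intervalIntegral.integral_add_adjacent_intervals
          (step_intble u a u) (step_intble u u b)]
        have h1 : ∫ z in a..u, (if u ≤ z then (1:ℝ) else 0) = 0 := by
          apply intervalIntegral.integral_zero_ae
          have hne : ∀ᵐ z : ℝ, z ≠ u := by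
            refine MeasureTheory.ae_iff.2 ?_
            simpa using MeasureTheory.measure_singleton u
          filter_upwards [hne] with z hz hz'
          rw [Set.uIoc_of_le h] at hz'
          have : ¬ u ≤ z := fun hle => hz (le_antisymm hz'.2 hle)
          simp [this]
        have h2 : ∫ z in u..b, (if u ≤ z then (1:ℝ) else 0) = b - u := by
          rw [intervalIntegral.integral_congr (g := fun _ => (1:ℝ))
            (by intro z hz; rw [Set.uIcc_of_le h'] at hz; simp [hz.1])]
          simp
        rw [h1, h2, max_eq_left h', max_eq_right h]
        ring
  rcases le_total a b with hab | hab
  · exact key a b hab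
  · rw [intervalIntegral.integral_symm, key b a hab]; ring

/-- The pinball (quantile) loss `ρ_τ(t) = t(τ − 𝟙{t < 0})`. -/
noncomputable def pinball (τ t : ℝ) : ℝ := t * (τ - if t < 0 then 1 else 0)

/-- Knight's identity. -/
theorem knight_identity (τ : ℝ) (hτ : τ ∈ Set.Ioo (0:ℝ) 1) (u v : ℝ) :
    pinball τ (u - v) - pinball τ u =
      -v * (τ - if u ≤ 0 then 1 else 0) +
        ∫ z in (0:ℝ)..v,
          ((if u ≤ z then (1:ℝ) else 0) - (if u ≤ 0 then 1 else 0)) := by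
  have hint : ∫ z in (0:ℝ)..v,
      ((if u ≤ z then (1:ℝ) else 0) - (if u ≤ 0 then 1 else 0)) =
      (max v u - max 0 u) - v * (if u ≤ 0 then 1 else 0) := by
    rw [intervalIntegral.integral_sub (step_intble u 0 v) intervalIntegrable_const,
      step_int, intervalIntegral.integral_const, smul_eq_mul]
    ring
  rw [hint]
  unfold pinball
  rcases le_or_gt u 0 with hu | hu
  · rw [if_pos hu, max_eq_left hu]
    rcases le_total v u with hv | hv
    · rw [max_eq_right hv, if_neg (not_lt.2 (by linarith : (0:ℝ) ≤ u - v))]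
      rcases lt_or_ge u 0 with h | h
      · rw [if_pos h]; ring
      · have h0 : u = 0 := le_antisymm hu h
        subst h0
        rw [if_neg (lt_irrefl 0)]; ring
    · rw [max_eq_left hv]
      split_ifs with hA hB hB
      · ring
      · have h0 : u = 0 := le_antisymm hu (not_lt.1 hB)
        subst h0; ring
      · have h0 : u = v := le_antisymm hv (by linarith)
        subst h0; ring
      · have h0 : u = v := le_antisymm hv (by linarith)
        subst h0
        have h1 : u = 0 := le_antisymm hu (not_lt.1 hB)
        subst h1; ring
  · rw [if_neg (not_le.2 hu), if_neg (not_lt.2 hu.le), max_eq_right hu.le]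
    rcases le_total v u with hv | hv
    · rw [max_eq_right hv, if_neg (not_lt.2 (by linarith : (0:ℝ) ≤ u - v))]; ring
    · rw [max_eq_left hv]
      rcases lt_or_ge (u - v) 0 with h | h
      · rw [if_pos h]; ring
      · have h0 : u = v := le_antisymm hv (by linarith)
        subst h0
        rw [if_neg (not_lt.2 h)]; ring
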